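/- Residual minimality of BGMRES (harmonically modified BFOM): Let A ∈ ℂ^{n×n}, B ∈ ℂ^{n×s}, and suppose V_1, …, V_{m+1} ∈ ℂ^{n×s}, ℋ_m ∈ ℂ^{ms×ms} invertible, H_{m+1,m} ∈ ℂ^{s×s}, and B̂ ∈ ℂ^{s×s} satisfy B = V_1 B̂, the block Arnoldi relation A 𝒱_m = 𝒱_m ℋ_m + V_{m+1} H_{m+1,m} Ê_m^*, and orthonormality 𝒱_{m+1}^* 𝒱_{m+1} = I_{(m+1)s} for 𝒱_{m+1} := [V_1 … V_{m+1}]. Let ℳ := ℋ_m^{-*} (Ê_m H_{m+1,m}^* H_{m+1,m}) Ê_m^*, assume ℋ_m + ℳ is invertible, and set Ξ_m := (ℋ_m + ℳ)^{-1} Ê_1 B̂ and X_m := 𝒱_m Ξ_m. Then for every Y ∈ ℂ^{ms×s}, ‖B − A X_m‖_F ≤ ‖B − A 𝒱_m Y‖_F. -/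

import Mathlib

open Matrix

noncomputable section

/-- Concatenation of `m` block vectors, each `n × s`, into an `n × (m·s)` matrix. -/
def blockCat {n m s : ℕ} (V : Fin m → Matrix (Fin n) (Fin s) ℂ) :
    Matrix (Fin n) (Fin m × Fin s) ℂ :=
  Matrix.of fun i p => V p.1 i p.2

/-- The `k`-th block unit vector `Ê_k = e_k ⊗ I_s ∈ ℂ^{ms × s}`. -/
def blockUnit (m s : ℕ) (k : Fin m) : Matrix (Fin m × Fin s) (Fin s) ℂ :=
  Matrix.of fun p j => if p.1 = k ∧ p.2 = j then 1 else 0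

/-- Frobenius norm of a complex matrix. -/
def frobNorm {I J : Type*} [Fintype I] [Fintype J] (X : Matrix I J ℂ) : ℝ :=
  Real.sqrt (∑ i, ∑ j, ‖X i j‖ ^ 2)

/-- Squared Frobenius norm. -/
def frobSq {I J : Type*} [Fintype I] [Fintype J] (X : Matrix I J ℂ) : ℝ :=
  ∑ i, ∑ j, ‖X i j‖ ^ 2

lemma frobSq_nonneg {I J : Type*} [Fintype I] [Fintype J] (X : Matrix I J ℂ) :
    0 ≤ frobSq X :=
  Finset.sum_nonneg fun _ _ => Finset.sum_nonneg fun _ _ => sq_nonneg _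

lemma frobNorm_eq_sqrt_frobSq {I J : Type*} [Fintype I] [Fintype J] (X : Matrix I J ℂ) :
    frobNorm X = Real.sqrt (frobSq X) := rfl

lemma conj_mul_self_eq (z : ℂ) : star z * z = ((‖z‖ : ℂ)) ^ 2 := by
  have h : star z = (starRingEnd ℂ) z := rfl
  rw [h, ← Complex.normSq_eq_conj_mul_self]
  norm_cast
  rw [← Complex.sq_norm]

lemma trace_conjTranspose_mul_self {I J : Type*} [Fintype I] [Fintype J]
    (X : Matrix I J ℂ) : Matrix.trace (Xᴴ * X) = (frobSq X : ℂ) := by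
  unfold frobSq
  rw [Matrix.trace, Finset.sum_comm]
  simp only [Matrix.diag, Matrix.mul_apply, Matrix.conjTranspose_apply, conj_mul_self_eq]
  push_cast
  ring

/-- Residual minimality of BGMRES (harmonically modified BFOM). -/
theorem bgmres_residual_minimality
    {n m s : ℕ} (hn : 0 < n) (hm : 0 < m) (hs : 0 < s)
    (A : Matrix (Fin n) (Fin n) ℂ) (B : Matrix (Fin n) (Fin s) ℂ)
    (V : Fin (m + 1) → Matrix (Fin n) (Fin s) ℂ)
    (ℋ : Matrix (Fin m × Fin s) (Fin m × Fin s) ℂ) (hℋ : IsUnit ℋ)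
    (H Bhat : Matrix (Fin s) (Fin s) ℂ)
    (Em E1 : Matrix (Fin m × Fin s) (Fin s) ℂ)
    (hEm : Em = blockUnit m s ⟨m - 1, by omega⟩)
    (hE1 : E1 = blockUnit m s ⟨0, hm⟩)
    (𝒱 : Matrix (Fin n) (Fin m × Fin s) ℂ)
    (h𝒱 : 𝒱 = blockCat fun k => V k.castSucc)
    (hB : B = V 0 * Bhat)
    (harnoldi : A * 𝒱 = 𝒱 * ℋ + V (Fin.last m) * H * Emᴴ)
    (horth : (blockCat V)ᴴ * blockCat V = 1)
    (ℳ : Matrix (Fin m × Fin s) (Fin m × Fin s) ℂ)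
    (hℳ : ℳ = (ℋ⁻¹)ᴴ * (Em * Hᴴ * H) * Emᴴ)
    (hinv : IsUnit (ℋ + ℳ))
    (Ξ : Matrix (Fin m × Fin s) (Fin s) ℂ)
    (hΞ : Ξ = (ℋ + ℳ)⁻¹ * E1 * Bhat)
    (X : Matrix (Fin n) (Fin s) ℂ) (hX : X = 𝒱 * Ξ) :
    ∀ Y : Matrix (Fin m × Fin s) (Fin s) ℂ,
      frobNorm (B - A * X) ≤ frobNorm (B - A * (𝒱 * Y)) := by
  intro Y
  have hdetHM : IsUnit (ℋ + ℳ).det := (Matrix.isUnit_iff_isUnit_det _).mp hinv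
  have hdetH : IsUnit ℋ.det := (Matrix.isUnit_iff_isUnit_det _).mp hℋ
  -- orthonormality of the blocks
  have hVV : ∀ k k' : Fin (m+1),
      (V k)ᴴ * V k' = if k = k' then (1 : Matrix (Fin s) (Fin s) ℂ) else 0 := by
    intro k k'
    ext l l'
    have h := congrFun (congrFun horth (k, l)) (k', l')
    simp only [Matrix.mul_apply, Matrix.conjTranspose_apply, blockCat, Matrix.of_apply,
      Matrix.one_apply, Prod.mk.injEq] at h
    by_cases hkk : k = k' <;>
      simp_all [Matrix.mul_apply, Matrix.conjTranspose_apply, Matrix.one_apply]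
  have hVE1 : 𝒱 * E1 = V 0 := by
    ext i j
    simp only [h𝒱, hE1, Matrix.mul_apply, blockCat, blockUnit, Matrix.of_apply]
    rw [Fintype.sum_prod_type]
    simp only [mul_ite, mul_one, mul_zero, ite_and]
    rw [Finset.sum_eq_single (⟨0, hm⟩ : Fin m)]
    · simp
    · intro b _ hb; simp [hb]
    · simp
  have hOO : 𝒱ᴴ * 𝒱 = 1 := by
    ext ⟨k, l⟩ ⟨k', l'⟩
    have h := congrFun (congrFun (hVV k.castSucc k'.castSucc) l) l'
    simp only [Matrix.mul_apply, Matrix.conjTranspose_apply, h𝒱, blockCat, Matrix.of_apply]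
    rw [show (∑ i, star (V k.castSucc i l) * V k'.castSucc i l')
        = ((V k.castSucc)ᴴ * V k'.castSucc) l l' from by
      simp [Matrix.mul_apply, Matrix.conjTranspose_apply], h]
    by_cases hkk : k = k' <;> simp_all [Matrix.one_apply, Prod.ext_iff, Fin.castSucc_inj]
  have hOL : 𝒱ᴴ * V (Fin.last m) = 0 := by
    ext ⟨k, l⟩ j
    have h := congrFun (congrFun (hVV k.castSucc (Fin.last m)) l) j
    simp only [Matrix.mul_apply, Matrix.conjTranspose_apply, h𝒱, blockCat, Matrix.of_apply]
    rw [show (∑ i, star (V k.castSucc i l) * V (Fin.last m) i j)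
        = ((V k.castSucc)ᴴ * V (Fin.last m)) l j from by
      simp [Matrix.mul_apply, Matrix.conjTranspose_apply], h]
    simp [(Fin.castSucc_lt_last k).ne]
  have hLO : (V (Fin.last m))ᴴ * 𝒱 = 0 := by
    have := congrArg Matrix.conjTranspose hOL
    simpa using this
  have hLL : (V (Fin.last m))ᴴ * V (Fin.last m) = 1 := by
    simpa using hVV (Fin.last m) (Fin.last m)
  -- residual decomposition
  have hres : ∀ Z : Matrix (Fin m × Fin s) (Fin s) ℂ,
      B - A * (𝒱 * Z)
        = 𝒱 * (E1 * Bhat - ℋ * Z) + V (Fin.last m) * (-(H * (Emᴴ * Z))) := by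
    intro Z
    rw [hB, ← hVE1, ← Matrix.mul_assoc A, harnoldi]
    simp only [Matrix.add_mul, Matrix.mul_add, Matrix.sub_mul, Matrix.mul_sub,
      Matrix.neg_mul, Matrix.mul_neg, Matrix.mul_assoc, sub_eq_add_neg, neg_add, neg_neg]
    abel
  have hRR : ∀ (Pm : Matrix (Fin m × Fin s) (Fin s) ℂ) (Qm : Matrix (Fin s) (Fin s) ℂ),
      (𝒱 * Pm + V (Fin.last m) * Qm)ᴴ * (𝒱 * Pm + V (Fin.last m) * Qm)
        = Pmᴴ * Pm + Qmᴴ * Qm := by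
    intro Pm Qm
    simp only [Matrix.conjTranspose_add, Matrix.conjTranspose_mul, Matrix.add_mul,
      Matrix.mul_add, Matrix.mul_assoc]
    rw [show 𝒱ᴴ * (𝒱 * Pm) = Pm from by rw [← Matrix.mul_assoc, hOO, Matrix.one_mul],
      show 𝒱ᴴ * (V (Fin.last m) * Qm) = 0 from by
        rw [← Matrix.mul_assoc, hOL, Matrix.zero_mul],
      show (V (Fin.last m))ᴴ * (𝒱 * Pm) = 0 from by
        rw [← Matrix.mul_assoc, hLO, Matrix.zero_mul],
      show (V (Fin.last m))ᴴ * (V (Fin.last m) * Qm) = Qm from by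
        rw [← Matrix.mul_assoc, hLL, Matrix.one_mul]]
    simp only [Matrix.mul_zero, add_zero, zero_add]
  -- normal equations
  have hXi : (ℋ + ℳ) * Ξ = E1 * Bhat := by
    rw [hΞ, ← Matrix.mul_assoc, ← Matrix.mul_assoc, Matrix.mul_nonsing_inv _ hdetHM,
      Matrix.one_mul]
  have hHM : ℋᴴ * ℳ = Em * Hᴴ * H * Emᴴ := by
    rw [hℳ, ← Matrix.mul_assoc, ← Matrix.mul_assoc,
      show ℋᴴ * (ℋ⁻¹)ᴴ = 1 from by
        rw [← Matrix.conjTranspose_mul, Matrix.nonsing_inv_mul _ hdetH,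
          Matrix.conjTranspose_one],
      Matrix.one_mul]
  have hK : ℋᴴ * (E1 * Bhat) - ℋᴴ * ℋ * Ξ - Em * Hᴴ * H * Emᴴ * Ξ = 0 := by
    rw [← hXi, ← Matrix.mul_assoc, Matrix.mul_add, hHM, Matrix.add_mul]
    abel
  -- the key Pythagorean identity
  have key : (E1 * Bhat - ℋ * Y)ᴴ * (E1 * Bhat - ℋ * Y)
        + (-(H * (Emᴴ * Y)))ᴴ * (-(H * (Emᴴ * Y)))
      = ((E1 * Bhat - ℋ * Ξ)ᴴ * (E1 * Bhat - ℋ * Ξ)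
          + (-(H * (Emᴴ * Ξ)))ᴴ * (-(H * (Emᴴ * Ξ)))
          + (ℋ * (Y - Ξ))ᴴ * (ℋ * (Y - Ξ))
          + (H * (Emᴴ * (Y - Ξ)))ᴴ * (H * (Emᴴ * (Y - Ξ))))
        - (Y - Ξ)ᴴ * (ℋᴴ * (E1 * Bhat) - ℋᴴ * ℋ * Ξ - Em * Hᴴ * H * Emᴴ * Ξ)
        - (ℋᴴ * (E1 * Bhat) - ℋᴴ * ℋ * Ξ - Em * Hᴴ * H * Emᴴ * Ξ)ᴴ * (Y - Ξ) := by
    simp only [Matrix.conjTranspose_sub, Matrix.conjTranspose_add, Matrix.conjTranspose_mul,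
      Matrix.conjTranspose_neg, Matrix.conjTranspose_conjTranspose, Matrix.sub_mul,
      Matrix.mul_sub, Matrix.add_mul, Matrix.mul_add, Matrix.neg_mul, Matrix.mul_neg,
      Matrix.mul_assoc, sub_eq_add_neg, neg_add, neg_neg]
    abel
  rw [hK] at key
  simp only [Matrix.mul_zero, Matrix.conjTranspose_zero, Matrix.zero_mul, sub_zero] at key
  -- pass to squared Frobenius norms via traces
  have tkeyR : frobSq (E1 * Bhat - ℋ * Y) + frobSq (-(H * (Emᴴ * Y)))
      = frobSq (E1 * Bhat - ℋ * Ξ) + frobSq (-(H * (Emᴴ * Ξ)))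
        + frobSq (ℋ * (Y - Ξ)) + frobSq (H * (Emᴴ * (Y - Ξ))) := by
    have h := congrArg Matrix.trace key
    simp only [Matrix.trace_add, trace_conjTranspose_mul_self] at h
    exact_mod_cast h
  have gval : ∀ Z : Matrix (Fin m × Fin s) (Fin s) ℂ,
      frobSq (B - A * (𝒱 * Z))
        = frobSq (E1 * Bhat - ℋ * Z) + frobSq (-(H * (Emᴴ * Z))) := by
    intro Z
    have h1 : (B - A * (𝒱 * Z))ᴴ * (B - A * (𝒱 * Z))
        = (E1 * Bhat - ℋ * Z)ᴴ * (E1 * Bhat - ℋ * Z)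
          + (-(H * (Emᴴ * Z)))ᴴ * (-(H * (Emᴴ * Z))) := by
      rw [hres Z, hRR]
    have h2 := congrArg Matrix.trace h1
    simp only [Matrix.trace_add, trace_conjTranspose_mul_self] at h2
    exact_mod_cast h2
  rw [frobNorm_eq_sqrt_frobSq, frobNorm_eq_sqrt_frobSq]
  apply Real.sqrt_le_sqrt
  rw [hX, gval Y, gval Ξ]
  have h1 := frobSq_nonneg (ℋ * (Y - Ξ))
  have h2 := frobSq_nonneg (H * (Emᴴ * (Y - Ξ)))
  linarith
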